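/- Let n ≥ 2 and let w_0, ..., w_{n-1} be real arc weights on the directed cycle on n vertices, with total weight w = Σ_i w_i nonzero. Let W be the weighted distance matrix, where W_{ii} = 0 and W_{ij} = Σ_{k=0}^{d-1} w_{(i+k) mod n} with d = (j - i) mod n ∈ {1,...,n-1} for i ≠ j. Let α be the vector with α_i = w_{(i-1) mod n}/w. Then α^T W = λ j^T where λ = w^{(2)}/w and w^{(2)} = Σ_{0 ≤ i < j ≤ n-1} w_i w_j. -/

import Mathlib

open Matrix
open Fin.CommRing

lemma aux_sq (f : ℕ → ℝ) (N : ℕ) :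
    2 * (∑ m ∈ Finset.range N, f m * ∑ t ∈ Finset.range m, f t)
      + ∑ m ∈ Finset.range N, (f m)^2 = (∑ m ∈ Finset.range N, f m)^2 := by
  induction N with
  | zero => simp
  | succ N ih =>
      rw [Finset.sum_range_succ, Finset.sum_range_succ,
        Finset.sum_range_succ (f := f)]
      linear_combination ih

theorem stmt_7 {n : ℕ} [NeZero n] (hn : 2 ≤ n) (w : Fin n → ℝ)
    (hw : (∑ i, w i) ≠ 0)
    (W : Matrix (Fin n) (Fin n) ℝ)
    (hW : W = Matrix.of fun i j => ∑ k ∈ Finset.range ((j - i : Fin n) : ℕ), w (i + (Fin.ofNat n k)))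
    (α : Fin n → ℝ) (hα : α = fun i => w (i - 1) / (∑ i, w i)) :
    vecMul α W = fun _ => (∑ i, ∑ j ∈ Finset.Ioi i, w i * w j) / (∑ i, w i) := by
  have hn1 : 1 ≤ n := le_trans (by norm_num) hn
  subst hW hα
  funext j0
  show (∑ i, (w (i - 1) / (∑ i, w i)) *
      (∑ k ∈ Finset.range ((j0 - i : Fin n) : ℕ), w (i + (k : Fin n)))) = _
  simp_rw [div_mul_eq_mul_div, ← Finset.sum_div]
  congr 1
  -- reindex i = j0 - m
  rw [← Fintype.sum_equiv (Equiv.subLeft j0)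
      (fun m => w (j0 - m - 1) *
        ∑ k ∈ Finset.range ((j0 - (j0 - m) : Fin n) : ℕ), w (j0 - m + (k : Fin n)))
      _ (fun m => rfl)]
  have hsub : ∀ m : Fin n, j0 - (j0 - m) = m := fun m => by ring
  -- rewrite each term in terms of F
  set F : ℕ → ℝ := fun t => w (j0 - 1 - (t : Fin n)) with hF
  have hterm : ∀ m : Fin n,
      w (j0 - m - 1) * ∑ k ∈ Finset.range ((j0 - (j0 - m) : Fin n) : ℕ), w (j0 - m + (k : Fin n))
        = F m.val * ∑ k ∈ Finset.range m.val, F k := by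
    intro m
    rw [hsub m]
    have h1 : w (j0 - m - 1) = F m.val := by
      simp only [hF, Fin.cast_val_eq_self]
      congr 1; ring
    rw [h1]
    congr 1
    rw [← Finset.sum_range_reflect (fun k => w (j0 - m + (k : Fin n))) m.val]
    refine Finset.sum_congr rfl ?_
    intro k hk
    simp only [Finset.mem_range] at hk
    have hk1 : 1 ≤ (m : ℕ) - k := by omega
    have hkm : k ≤ (m : ℕ) - 1 := by omega
    have hcast : (((m : ℕ) - 1 - k : ℕ) : Fin n) = m - 1 - (k : Fin n) := by
      rw [Nat.cast_sub hkm, Nat.cast_sub (by omega : 1 ≤ (m : ℕ))]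
      simp [Fin.cast_val_eq_self]
    simp only [hF, hcast]
    congr 1; ring
  simp_rw [hterm]
  -- now LHS is a range-sum over F
  rw [Fin.sum_univ_eq_sum_range (fun m => F m * ∑ k ∈ Finset.range m, F k) n]
  -- RHS: convert to range form with g
  set g : ℕ → ℝ := fun t => w (t : Fin n) with hg
  have hR : (∑ i, ∑ j ∈ Finset.Ioi i, w i * w j)
      = ∑ m ∈ Finset.range n, g m * ∑ t ∈ Finset.range m, g t := by
    have h1 : ∀ i : Fin n, (∑ j ∈ Finset.Ioi i, w i * w j)
        = ∑ t ∈ Finset.Ico (i.val + 1) n, g i.val * g t := by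
      intro i
      have hmap := Finset.sum_map (Finset.Ioi i) Fin.valEmbedding (fun t => g i.val * g t)
      rw [Fin.map_valEmbedding_Ioi] at hmap
      have hIco : Finset.Ico (i.val + 1) n = Finset.Ioc (i.val : ℕ) (n - 1) := by
        ext t; simp only [Finset.mem_Ioc, Finset.mem_Ico]; omega
      rw [hIco, show Finset.Ioc (i.val : ℕ) (n - 1) = Finset.Ioo (i.val : ℕ) n by
        ext t; simp only [Finset.mem_Ioc, Finset.mem_Ioo]; omega, hmap]
      refine Finset.sum_congr rfl fun t _ => ?_
      simp [hg, Fin.cast_val_eq_self]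
    simp_rw [h1]
    rw [Fin.sum_univ_eq_sum_range (fun m => ∑ t ∈ Finset.Ico (m + 1) n, g m * g t) n,
      Finset.range_eq_Ico, Finset.sum_Ico_Ico_comm' 0 n (fun i j => g i * g j)]
    rw [← Finset.range_eq_Ico]
    refine Finset.sum_congr rfl fun m _ => ?_
    rw [Finset.mul_sum]
    rw [Finset.range_eq_Ico]
    exact Finset.sum_congr rfl fun t _ => mul_comm _ _
  rw [hR]
  -- single sums of F and g agree
  have hsumF : ∑ t ∈ Finset.range n, F t = ∑ i, w i := by
    rw [← Fin.sum_univ_eq_sum_range (fun t => F t) n]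
    exact Fintype.sum_equiv (Equiv.subLeft (j0 - 1))
      (fun t => F t.val) w (fun t => by simp [hF, Fin.cast_val_eq_self])
  have hsumF2 : ∑ t ∈ Finset.range n, (F t)^2 = ∑ i, (w i)^2 := by
    rw [← Fin.sum_univ_eq_sum_range (fun t => (F t)^2) n]
    exact Fintype.sum_equiv (Equiv.subLeft (j0 - 1))
      (fun t => (F t.val)^2) (fun i => (w i)^2)
      (fun t => by simp [hF, Fin.cast_val_eq_self])
  have hsumg : ∑ t ∈ Finset.range n, g t = ∑ i, w i := by
    rw [← Fin.sum_univ_eq_sum_range (fun t => g t) n]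
    exact Fintype.sum_congr _ _ (fun i => by simp [hg, Fin.cast_val_eq_self])
  have hsumg2 : ∑ t ∈ Finset.range n, (g t)^2 = ∑ i, (w i)^2 := by
    rw [← Fin.sum_univ_eq_sum_range (fun t => (g t)^2) n]
    exact Fintype.sum_congr _ _ (fun i => by simp [hg, Fin.cast_val_eq_self])
  have hA := aux_sq F n
  have hB := aux_sq g n
  rw [hsumF, hsumF2] at hA
  rw [hsumg, hsumg2] at hB
  linarith
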